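/- Let ψ : ℝ → ℝ be an infinitely differentiable function with ψ(θ) = 0 for |θ| ≤ 1, 0 ≤ ψ(θ) ≤ 1 for 1 ≤ |θ| ≤ 2, and ψ(θ) = 1 for |θ| ≥ 2. For ε ∈ (0,π/2] define z_n^ε = (1/2π) ∫_{−π}^{π} e^{inθ} (1 − ψ(θ/ε)) dθ for n ∈ ℤ. Then there exists a constant C > 0, depending only on ψ, such that for all ε ∈ (0,π/2]: |z_n^ε − z_{n−1}^ε| ≤ C ε² for every n ∈ ℤ, and |z_n^ε − z_{n−1}^ε| ≤ C/n² for every n ∈ ℤ with n ≠ 0. -/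

import Mathlib

open MeasureTheory Filter Set

/-- The `n`-th Fourier coefficient of `θ ↦ 1 − ψ(θ/ε)`:
`z_n^ε = (1/2π) ∫_{−π}^{π} e^{inθ} (1 − ψ(θ/ε)) dθ`. -/
noncomputable def zCoeff (ψ : ℝ → ℝ) (ε : ℝ) (n : ℤ) : ℂ :=
  (1 / (2 * Real.pi)) *
    ∫ θ in (-Real.pi)..Real.pi, Complex.exp (Complex.I * n * θ) * ((1 - ψ (θ / ε) : ℝ) : ℂ)

private lemma hasDerivAt_exp_neg_I (t : ℝ) :
    HasDerivAt (fun s : ℝ => Complex.exp (-(Complex.I * s)))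
      (-Complex.I * Complex.exp (-(Complex.I * t))) t := by
  have h2 : HasDerivAt (fun z : ℂ => -(Complex.I * z)) (-Complex.I) (t : ℂ) := by
    simpa [Pi.neg_def] using ((hasDerivAt_id (t : ℂ)).const_mul Complex.I).neg
  have h1 : HasDerivAt (fun z : ℂ => Complex.exp (-(Complex.I * z)))
      (-Complex.I * Complex.exp (-(Complex.I * (t : ℂ)))) (t : ℂ) := by
    have := (Complex.hasDerivAt_exp (-(Complex.I * (t : ℂ)))).comp (t : ℂ) h2
    simpa [Function.comp_def, mul_comm] using this
  exact h1.comp_ofReal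

private lemma abs_exp_neg_I (θ : ℝ) :
    ‖Complex.exp (-(Complex.I * θ))‖ = 1 := by
  rw [show -(Complex.I * (θ:ℂ)) = (((-θ : ℝ)):ℂ) * Complex.I by push_cast; ring,
    Complex.norm_exp_ofReal_mul_I]

private lemma abs_one_sub_exp_le (θ : ℝ) :
    ‖1 - Complex.exp (-(Complex.I * θ))‖ ≤ |θ| := by
  have key := Convex.norm_image_sub_le_of_norm_hasDerivWithin_le
    (f := fun s : ℝ => Complex.exp (-(Complex.I * s)))
    (f' := fun t : ℝ => -Complex.I * Complex.exp (-(Complex.I * t))) (s := Set.univ) (C := 1)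
    (fun x _ => (hasDerivAt_exp_neg_I x).hasDerivWithinAt)
    (fun x _ => by
      rw [norm_mul, abs_exp_neg_I]
      simp)
    convex_univ (Set.mem_univ (0:ℝ)) (Set.mem_univ θ)
  have h0 : Complex.exp (-(Complex.I * ((0:ℝ):ℂ))) = 1 := by simp
  calc ‖1 - Complex.exp (-(Complex.I * θ))‖
      = ‖Complex.exp (-(Complex.I * θ)) - Complex.exp (-(Complex.I * ((0:ℝ):ℂ)))‖ := by
        rw [h0, norm_sub_rev]
    _ ≤ 1 * ‖θ - (0:ℝ)‖ := key
    _ = |θ| := by simp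

private lemma deriv_eq_zero_of_const (f : ℝ → ℝ) (c : ℝ) (hf : Continuous (deriv f))
    (h : ∀ x, 2 ≤ |x| → f x = c) : ∀ x, 2 ≤ |x| → deriv f x = 0 := by
  have hopen : ∀ x : ℝ, 2 < |x| → deriv f x = 0 := by
    intro x hx
    have hev : f =ᶠ[nhds x] fun _ => c := by
      have ho : IsOpen {y : ℝ | 2 < |y|} := isOpen_lt continuous_const continuous_abs
      filter_upwards [ho.mem_nhds hx] with y hy using h y hy.le
    rw [hev.deriv_eq]
    exact deriv_const x c
  intro x hx
  rcases hx.lt_or_eq with h' | h'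
  · exact hopen x h'
  · rcases (abs_eq (by norm_num : (0:ℝ) ≤ 2)).mp h'.symm with rfl | rfl
    · have h1 : Tendsto (deriv f) (nhdsWithin 2 (Set.Ioi 2)) (nhds (deriv f 2)) :=
        (hf.continuousAt (x := 2)).tendsto.mono_left nhdsWithin_le_nhds
      have h2 : Tendsto (deriv f) (nhdsWithin 2 (Set.Ioi 2)) (nhds 0) := by
        apply Tendsto.congr' _ tendsto_const_nhds
        filter_upwards [self_mem_nhdsWithin] with y hy
        exact (hopen y (lt_of_lt_of_le hy (le_abs_self y))).symm
      exact tendsto_nhds_unique h1 h2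
    · have h1 : Tendsto (deriv f) (nhdsWithin (-2) (Set.Iio (-2))) (nhds (deriv f (-2))) :=
        (hf.continuousAt (x := -2)).tendsto.mono_left nhdsWithin_le_nhds
      have h2 : Tendsto (deriv f) (nhdsWithin (-2) (Set.Iio (-2))) (nhds 0) := by
        apply Tendsto.congr' _ tendsto_const_nhds
        filter_upwards [self_mem_nhdsWithin] with y hy
        have : (2:ℝ) < |y| := by
          have : y < -2 := hy
          rw [abs_of_neg (by linarith)]; linarith
        exact (hopen y this).symm
      exact tendsto_nhds_unique h1 h2

/-- **Estimates on the differences of Fourier coefficients (proof of Theorem 2.1 of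
Seifert).**  Let `ψ` be a smooth cutoff with `ψ = 0` on `[−1,1]`, `0 ≤ ψ ≤ 1` on
`1 ≤ |θ| ≤ 2`, and `ψ = 1` for `|θ| ≥ 2`.  Then there is a constant `C > 0`,
depending only on `ψ`, such that for all `ε ∈ (0, π/2]`:
`|z_n^ε − z_{n−1}^ε| ≤ C ε²` for every `n ∈ ℤ`, and
`|z_n^ε − z_{n−1}^ε| ≤ C/n²` for every `n ≠ 0`. -/
theorem stmt_13 (ψ : ℝ → ℝ) (hψ_smooth : ContDiff ℝ (⊤ : ℕ∞) ψ)
    (hψ0 : ∀ θ : ℝ, |θ| ≤ 1 → ψ θ = 0)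
    (hψ01 : ∀ θ : ℝ, 1 ≤ |θ| → |θ| ≤ 2 → 0 ≤ ψ θ ∧ ψ θ ≤ 1)
    (hψ1 : ∀ θ : ℝ, 2 ≤ |θ| → ψ θ = 1) :
    ∃ C : ℝ, 0 < C ∧ ∀ ε ∈ Set.Ioc (0 : ℝ) (Real.pi / 2),
      (∀ n : ℤ, ‖zCoeff ψ ε n - zCoeff ψ ε (n - 1)‖ ≤ C * ε ^ 2) ∧
      (∀ n : ℤ, n ≠ 0 →
        ‖zCoeff ψ ε n - zCoeff ψ ε (n - 1)‖ ≤ C / (n : ℝ) ^ 2) := by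
  have hψ_diff : Differentiable ℝ ψ := hψ_smooth.differentiable (by simp)
  have hψ_cont : Continuous ψ := hψ_smooth.continuous
  have hd1_smooth : ContDiff ℝ (⊤:ℕ∞) (deriv ψ) := (contDiff_infty_iff_deriv.mp hψ_smooth).2
  set d1 := deriv ψ with hd1def
  have hd1_cont : Continuous d1 := hd1_smooth.continuous
  have hd1_diff : Differentiable ℝ d1 := hd1_smooth.differentiable (by simp)
  have hd2_smooth : ContDiff ℝ (⊤:ℕ∞) (deriv d1) := (contDiff_infty_iff_deriv.mp hd1_smooth).2
  set d2 := deriv d1 with hd2def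
  have hd2_cont : Continuous d2 := hd2_smooth.continuous
  have hd1_zero : ∀ x : ℝ, 2 ≤ |x| → d1 x = 0 := deriv_eq_zero_of_const ψ 1 hd1_cont hψ1
  have hd2_zero : ∀ x : ℝ, 2 ≤ |x| → d2 x = 0 :=
    deriv_eq_zero_of_const d1 0 hd2_cont hd1_zero
  -- global bounds on the derivatives
  have hbound : ∀ (f : ℝ → ℝ), Continuous f → (∀ x : ℝ, 2 ≤ |x| → f x = 0) →
      ∃ M : ℝ, 0 ≤ M ∧ ∀ x : ℝ, |f x| ≤ M := by
    intro f hfc hf0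
    obtain ⟨M, hM⟩ := (isCompact_Icc (a := (-2:ℝ)) (b := 2)).exists_bound_of_continuousOn
      hfc.continuousOn
    refine ⟨max M 0, le_max_right _ _, fun x => ?_⟩
    by_cases hx : x ∈ Set.Icc (-2:ℝ) 2
    · exact le_trans (hM x hx) (le_max_left _ _)
    · have h2 : 2 ≤ |x| := by
        simp only [Set.mem_Icc, not_and_or, not_le] at hx
        rcases hx with h | h
        · rw [abs_of_neg (by linarith)]; linarith
        · rw [abs_of_pos (by linarith)]; linarith
      rw [hf0 x h2, abs_zero]
      exact le_max_right _ _
  obtain ⟨M₁, hM₁0, hM₁⟩ := hbound d1 hd1_cont hd1_zero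
  obtain ⟨M₂, hM₂0, hM₂⟩ := hbound d2 hd2_cont hd2_zero
  have hπ := Real.pi_gt_three
  refine ⟨2 + 2*Real.pi + 8*(M₁+M₂), by nlinarith, ?_⟩
  set C := 2 + 2*Real.pi + 8*(M₁+M₂) with hCdef
  rintro ε ⟨hε0, hεπ⟩
  have hεne : ε ≠ 0 := ne_of_gt hε0
  -- the functions
  set u : ℝ → ℂ := fun θ => 1 - Complex.exp (-(Complex.I * θ)) with hu_def
  set u1 : ℝ → ℂ := fun θ => Complex.I * Complex.exp (-(Complex.I * θ)) with hu1_def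
  set u2 : ℝ → ℂ := fun θ => Complex.exp (-(Complex.I * θ)) with hu2_def
  set v : ℝ → ℂ := fun θ => 1 - (ψ (θ/ε) : ℂ) with hv_def
  set v1 : ℝ → ℂ := fun θ => -((d1 (θ/ε) : ℂ) / (ε:ℂ)) with hv1_def
  set v2 : ℝ → ℂ := fun θ => -((d2 (θ/ε) : ℂ) / (ε:ℂ)^2) with hv2_def
  set g : ℝ → ℂ := fun θ => u θ * v θ with hg_def
  set g1 : ℝ → ℂ := fun θ => u1 θ * v θ + u θ * v1 θ with hg1_def
  set g2 : ℝ → ℂ := fun θ => u2 θ * v θ + 2*(u1 θ * v1 θ) + u θ * v2 θ with hg2_def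
  -- derivatives
  have huderiv : ∀ t : ℝ, HasDerivAt u (u1 t) t := by
    intro t
    have := (hasDerivAt_exp_neg_I t).const_sub 1
    rw [hu_def, hu1_def]
    simpa using this
  have hu1deriv : ∀ t : ℝ, HasDerivAt u1 (u2 t) t := by
    intro t
    have := (hasDerivAt_exp_neg_I t).const_mul Complex.I
    rw [hu1_def, hu2_def]
    refine this.congr_deriv ?_
    rw [show Complex.I * (-Complex.I * Complex.exp (-(Complex.I * t)))
        = -(Complex.I*Complex.I) * Complex.exp (-(Complex.I * t)) by ring, Complex.I_mul_I]
    ring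
  have hψcomp : ∀ t : ℝ, HasDerivAt (fun s : ℝ => ψ (s/ε)) (d1 (t/ε) / ε) t := by
    intro t
    have h1 : HasDerivAt (fun s : ℝ => s/ε) (1/ε) t := by
      simpa using (hasDerivAt_id t).div_const ε
    have := ((hψ_diff (t/ε)).hasDerivAt).comp t h1
    simpa [Function.comp_def, mul_one_div, div_eq_mul_inv] using this
  have hd1comp : ∀ t : ℝ, HasDerivAt (fun s : ℝ => d1 (s/ε)) (d2 (t/ε) / ε) t := by
    intro t
    have h1 : HasDerivAt (fun s : ℝ => s/ε) (1/ε) t := by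
      simpa using (hasDerivAt_id t).div_const ε
    have := ((hd1_diff (t/ε)).hasDerivAt).comp t h1
    simpa [Function.comp_def, mul_one_div, div_eq_mul_inv] using this
  have hvderiv : ∀ t : ℝ, HasDerivAt v (v1 t) t := by
    intro t
    have := ((hψcomp t).ofReal_comp).const_sub 1
    rw [hv_def, hv1_def]
    simpa [Complex.ofReal_div] using this
  have hv1deriv : ∀ t : ℝ, HasDerivAt v1 (v2 t) t := by
    intro t
    have h := (((hd1comp t).ofReal_comp).div_const (ε:ℂ)).neg
    have heq : -((((d2 (t/ε) / ε : ℝ)):ℂ) / (ε:ℂ)) = -((d2 (t/ε) : ℂ) / (ε:ℂ)^2) := by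
      push_cast
      rw [div_div, sq]
    rw [hv1_def, hv2_def]
    simpa only [← heq, Pi.neg_def] using h
  have hgderiv : ∀ t : ℝ, HasDerivAt g (g1 t) t := fun t => by
    rw [hg_def, hg1_def]
    exact (huderiv t).mul (hvderiv t)
  have hg1deriv : ∀ t : ℝ, HasDerivAt g1 (g2 t) t := by
    intro t
    have h1 := (hu1deriv t).mul (hvderiv t)
    have h2 := (huderiv t).mul (hv1deriv t)
    have h3 := h1.add h2
    rw [hg1_def, hg2_def]
    refine h3.congr_deriv ?_
    ring
  -- continuity
  have hc_exp : Continuous (fun θ : ℝ => Complex.exp (-(Complex.I*θ))) :=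
    Complex.continuous_exp.comp (continuous_const.mul Complex.continuous_ofReal).neg
  have hcu : Continuous u := by rw [hu_def]; exact continuous_const.sub hc_exp
  have hcu1 : Continuous u1 := by rw [hu1_def]; exact continuous_const.mul hc_exp
  have hcu2 : Continuous u2 := by rw [hu2_def]; exact hc_exp
  have hcv : Continuous v := by
    rw [hv_def]
    exact continuous_const.sub
      (Complex.continuous_ofReal.comp (hψ_cont.comp (continuous_id.div_const ε)))
  have hcv1 : Continuous v1 := by
    rw [hv1_def]
    exact ((Complex.continuous_ofReal.comp (hd1_cont.comp (continuous_id.div_const ε))).div_const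
      _).neg
  have hcv2 : Continuous v2 := by
    rw [hv2_def]
    exact ((Complex.continuous_ofReal.comp (hd2_cont.comp (continuous_id.div_const ε))).div_const
      _).neg
  have hcg : Continuous g := by rw [hg_def]; exact hcu.mul hcv
  have hcg1 : Continuous g1 := by rw [hg1_def]; exact (hcu1.mul hcv).add (hcu.mul hcv1)
  have hcg2 : Continuous g2 := by
    rw [hg2_def]
    exact ((hcu2.mul hcv).add (continuous_const.mul (hcu1.mul hcv1))).add (hcu.mul hcv2)
  have hcφ : ∀ n : ℤ, Continuous (fun θ : ℝ => Complex.exp (Complex.I * n * θ)) := fun n =>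
    Complex.continuous_exp.comp (continuous_const.mul Complex.continuous_ofReal)
  -- vanishing away from the support
  have hvzero : ∀ θ : ℝ, 2*ε ≤ |θ| → v θ = 0 ∧ v1 θ = 0 ∧ v2 θ = 0 := by
    intro θ hθ
    have h2 : 2 ≤ |θ/ε| := by
      rw [abs_div, abs_of_pos hε0, le_div_iff₀ hε0]; linarith
    refine ⟨?_, ?_, ?_⟩
    · rw [hv_def]; simp [hψ1 _ h2]
    · rw [hv1_def]; simp [hd1_zero _ h2]
    · rw [hv2_def]; simp [hd2_zero _ h2]
  have hgzero : ∀ θ : ℝ, 2*ε ≤ |θ| → g θ = 0 ∧ g1 θ = 0 ∧ g2 θ = 0 := by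
    intro θ hθ
    obtain ⟨h1, h2, h3⟩ := hvzero θ hθ
    refine ⟨?_, ?_, ?_⟩
    · rw [hg_def]; simp [h1]
    · rw [hg1_def]; simp [h1, h2]
    · rw [hg2_def]; simp [h1, h2, h3]
  have hπε : 2*ε ≤ Real.pi := by linarith
  have hππ : 2*ε ≤ |Real.pi| := by rw [abs_of_pos Real.pi_pos]; exact hπε
  have hπν : 2*ε ≤ |(-Real.pi : ℝ)| := by rw [abs_neg, abs_of_pos Real.pi_pos]; exact hπε
  -- splitting of the integral
  have hsplit : ∀ F : ℝ → ℂ, Continuous F → (∀ θ : ℝ, 2*ε ≤ |θ| → F θ = 0) →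
      ∫ θ in (-Real.pi)..Real.pi, F θ = ∫ θ in (-(2*ε))..(2*ε), F θ := by
    intro F hFc hF0
    have hint : ∀ a b : ℝ, IntervalIntegrable F volume a b := fun a b =>
      hFc.intervalIntegrable a b
    have h1 : ∫ θ in (-Real.pi)..(-(2*ε)), F θ = 0 := by
      have heq : Set.EqOn F (fun _ => (0:ℂ)) (Set.uIcc (-Real.pi) (-(2*ε))) := by
        intro θ hθ
        rw [Set.uIcc_of_le (by linarith)] at hθ
        exact hF0 θ (by rw [abs_of_nonpos (by linarith [hθ.2])]; linarith [hθ.2])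
      rw [intervalIntegral.integral_congr heq, intervalIntegral.integral_const, smul_zero]
    have h2 : ∫ θ in (2*ε)..Real.pi, F θ = 0 := by
      have heq : Set.EqOn F (fun _ => (0:ℂ)) (Set.uIcc (2*ε) Real.pi) := by
        intro θ hθ
        rw [Set.uIcc_of_le (by linarith)] at hθ
        exact hF0 θ (by rw [abs_of_nonneg (by linarith [hθ.1])]; linarith [hθ.1])
      rw [intervalIntegral.integral_congr heq, intervalIntegral.integral_const, smul_zero]
    have e1 := intervalIntegral.integral_add_adjacent_intervals
      (hint (-Real.pi) (-(2*ε))) (hint (-(2*ε)) Real.pi)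
    have e2 := intervalIntegral.integral_add_adjacent_intervals
      (hint (-(2*ε)) (2*ε)) (hint (2*ε) Real.pi)
    rw [← e1, ← e2, h1, h2]
    ring
  -- representation of the difference of coefficients
  have hrep : ∀ n : ℤ, zCoeff ψ ε n - zCoeff ψ ε (n-1)
      = (1/(2*(Real.pi:ℂ))) * ∫ θ in (-Real.pi)..Real.pi,
          g θ * Complex.exp (Complex.I * n * θ) := by
    intro n
    have hint : ∀ m : ℤ, IntervalIntegrable
        (fun θ : ℝ => Complex.exp (Complex.I * m * θ) * ((1 - ψ (θ / ε) : ℝ) : ℂ))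
        volume (-Real.pi) Real.pi := fun m =>
      ((hcφ m).mul (Complex.continuous_ofReal.comp
        (continuous_const.sub (hψ_cont.comp (continuous_id.div_const ε))))).intervalIntegrable _ _
    rw [zCoeff, zCoeff, ← mul_sub]
    congr 1
    rw [← intervalIntegral.integral_sub (hint n) (hint (n-1))]
    apply intervalIntegral.integral_congr
    intro θ _
    have hexp : Complex.exp (Complex.I * ((n:ℂ) - 1) * θ)
        = Complex.exp (Complex.I * n * θ) * Complex.exp (-(Complex.I * θ)) := by
      rw [← Complex.exp_add]
      congr 1
      ring
    simp only [hg_def, hu_def, hv_def]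
    push_cast
    rw [hexp]
    ring
  -- basic bounds
  have hψ01' : ∀ x : ℝ, 0 ≤ ψ x ∧ ψ x ≤ 1 := by
    intro x
    rcases le_total |x| 1 with h | h
    · rw [hψ0 x h]; norm_num
    · rcases le_total |x| 2 with h2 | h2
      · exact hψ01 x h h2
      · rw [hψ1 x h2]; norm_num
  have hv_bd : ∀ θ : ℝ, ‖v θ‖ ≤ 1 := by
    intro θ
    have h := hψ01' (θ/ε)
    rw [hv_def]
    simp only []
    rw [show (1:ℂ) - ((ψ (θ/ε) : ℝ):ℂ) = (((1 - ψ (θ/ε) : ℝ)):ℂ) by push_cast; ring,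
      Complex.norm_real, Real.norm_eq_abs]
    rw [abs_le]
    constructor <;> linarith [h.1, h.2]
  have hv1_bd : ∀ θ : ℝ, ‖v1 θ‖ ≤ M₁ / ε := by
    intro θ
    rw [hv1_def]
    simp only [norm_neg, norm_div, Complex.norm_real, Real.norm_eq_abs]
    rw [abs_of_pos hε0]
    gcongr
    exact hM₁ _
  have hv2_bd : ∀ θ : ℝ, ‖v2 θ‖ ≤ M₂ / ε^2 := by
    intro θ
    rw [hv2_def]
    simp only [norm_neg, norm_div, norm_pow, Complex.norm_real, Real.norm_eq_abs]
    rw [abs_of_pos hε0]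
    gcongr
    exact hM₂ _
  have hu_bd : ∀ θ : ℝ, ‖u θ‖ ≤ |θ| := by
    intro θ; rw [hu_def]; exact abs_one_sub_exp_le θ
  have hu1_bd : ∀ θ : ℝ, ‖u1 θ‖ = 1 := by
    intro θ; rw [hu1_def]
    simp only [norm_mul, Complex.norm_I, one_mul]
    exact abs_exp_neg_I θ
  have hu2_bd : ∀ θ : ℝ, ‖u2 θ‖ = 1 := by
    intro θ; rw [hu2_def]; exact abs_exp_neg_I θ
  have hφ_abs : ∀ (n : ℤ) (θ : ℝ), ‖Complex.exp (Complex.I * n * θ)‖ = 1 := by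
    intro n θ
    rw [show Complex.I * (n:ℂ) * (θ:ℝ) = (((n*θ : ℝ)):ℂ) * Complex.I by push_cast; ring,
      Complex.norm_exp_ofReal_mul_I]
  have habs_coef : ‖1/(2*(Real.pi:ℂ))‖ = 1/(2*Real.pi) := by
    rw [show (1/(2*(Real.pi:ℂ))) = (((1/(2*Real.pi) : ℝ)):ℂ) by push_cast; ring,
      Complex.norm_real, Real.norm_eq_abs, abs_of_pos (by positivity)]
  have habs_θ : ∀ θ ∈ Set.uIoc (-(2*ε)) (2*ε), |θ| ≤ 2*ε := by
    intro θ hθ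
    rw [Set.uIoc_of_le (by linarith)] at hθ
    rw [abs_le]
    exact ⟨le_of_lt hθ.1, hθ.2⟩
  constructor
  · -- first bound : C ε²
    intro n
    rw [hrep n, norm_mul, habs_coef]
    have hF0 : ∀ θ : ℝ, 2*ε ≤ |θ| → g θ * Complex.exp (Complex.I * n * θ) = 0 := by
      intro θ hθ
      rw [(hgzero θ hθ).1, zero_mul]
    rw [hsplit (fun θ => g θ * Complex.exp (Complex.I * n * θ)) (hcg.mul (hcφ n)) hF0]
    have hb : ∀ θ ∈ Set.uIoc (-(2*ε)) (2*ε), ‖g θ * Complex.exp (Complex.I * n * θ)‖ ≤ 2*ε := by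
      intro θ hθ
      rw [norm_mul, hφ_abs, mul_one, hg_def]
      simp only []
      rw [norm_mul]
      calc ‖u θ‖ * ‖v θ‖ ≤ |θ| * 1 :=
            mul_le_mul (hu_bd θ) (hv_bd θ) (norm_nonneg _) (abs_nonneg _)
        _ ≤ 2*ε := by rw [mul_one]; exact habs_θ θ hθ
    have := intervalIntegral.norm_integral_le_of_norm_le_const hb
    have h4 : |2*ε - (-(2*ε))| = 4*ε := by rw [abs_of_pos (by linarith)]; ring
    rw [h4] at this
    calc (1/(2*Real.pi)) * ‖∫ θ in (-(2*ε))..(2*ε),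
          g θ * Complex.exp (Complex.I * n * θ)‖
        ≤ (1/(2*Real.pi)) * (2*ε * (4*ε)) := by
          apply mul_le_mul_of_nonneg_left this (by positivity)
      _ = (1/(2*Real.pi)) * (8*ε^2) := by ring
      _ ≤ 1 * (8*ε^2) := by
          gcongr
          rw [div_le_one (by positivity)]
          linarith
      _ = 8*ε^2 := one_mul _
      _ ≤ C * ε^2 := by rw [hCdef]; nlinarith [sq_nonneg ε]
  · -- second bound : C / n²
    intro n hn
    have hnC : ((n:ℂ)) ≠ 0 := Int.cast_ne_zero.mpr hn
    have hIn : (Complex.I * n) ≠ 0 := mul_ne_zero Complex.I_ne_zero hnC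
    have hnR : ((n:ℝ)) ≠ 0 := Int.cast_ne_zero.mpr hn
    -- derivative of the antiderivative of exp(I n θ)
    have hVder : ∀ x : ℝ, HasDerivAt (fun θ : ℝ => Complex.exp (Complex.I * n * θ) / (Complex.I*n))
        (Complex.exp (Complex.I * n * x)) x := by
      intro x
      have hinner : HasDerivAt (fun z : ℂ => Complex.I * n * z) (Complex.I * n) (x:ℂ) := by
        simpa using (hasDerivAt_id (x:ℂ)).const_mul (Complex.I * (n:ℂ))
      have h2 : HasDerivAt (fun z : ℂ => Complex.exp (Complex.I * n * z))
          (Complex.exp (Complex.I * n * (x:ℂ)) * (Complex.I * n)) (x:ℂ) := by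
        have := (Complex.hasDerivAt_exp (Complex.I * n * (x:ℂ))).comp (x:ℂ) hinner
        simpa [Function.comp_def] using this
      have h3 := (h2.comp_ofReal).div_const (Complex.I * (n:ℂ))
      simpa [mul_div_cancel_right₀ _ hIn] using h3
    have step : ∀ (G G' : ℝ → ℂ), (∀ x : ℝ, HasDerivAt G (G' x) x) → Continuous G' →
        G Real.pi = 0 → G (-Real.pi) = 0 →
        (∫ θ in (-Real.pi)..Real.pi, G θ * Complex.exp (Complex.I * n * θ))
        = -(∫ θ in (-Real.pi)..Real.pi, G' θ * Complex.exp (Complex.I * n * θ)) / (Complex.I*n) := by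
      intro G G' hG hG' hGp hGm
      have h := intervalIntegral.integral_mul_deriv_eq_deriv_mul
        (a := -Real.pi) (b := Real.pi) (u := G) (u' := G')
        (v := fun θ : ℝ => Complex.exp (Complex.I*n*θ) / (Complex.I*n))
        (v' := fun θ : ℝ => Complex.exp (Complex.I*n*θ))
        (fun x _ => hG x) (fun x _ => hVder x)
        (hG'.intervalIntegrable (-Real.pi) Real.pi) ((hcφ n).intervalIntegrable (-Real.pi) Real.pi)
      rw [hGp, hGm] at h
      rw [h]
      have heq : ∀ θ : ℝ, G' θ * (Complex.exp (Complex.I*n*θ) / (Complex.I*n))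
          = (G' θ * Complex.exp (Complex.I*n*θ)) / (Complex.I*n) := fun θ => by ring
      simp only [heq, zero_mul, sub_zero, zero_sub]
      rw [intervalIntegral.integral_div]
      ring
    have s1 := step g g1 hgderiv hcg1 (hgzero _ hππ).1 (hgzero _ hπν).1
    have s2 := step g1 g2 hg1deriv hcg2 (hgzero _ hππ).2.1 (hgzero _ hπν).2.1
    have hIBP : (∫ θ in (-Real.pi)..Real.pi, g θ * Complex.exp (Complex.I * n * θ))
        = (∫ θ in (-Real.pi)..Real.pi, g2 θ * Complex.exp (Complex.I * n * θ))
          / ((Complex.I*n) * (Complex.I*n)) := by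
      rw [s1, s2]
      field_simp
    -- bound the g2 integral
    have hF0 : ∀ θ : ℝ, 2*ε ≤ |θ| → g2 θ * Complex.exp (Complex.I * n * θ) = 0 := by
      intro θ hθ
      rw [(hgzero θ hθ).2.2, zero_mul]
    have hb : ∀ θ ∈ Set.uIoc (-(2*ε)) (2*ε),
        ‖g2 θ * Complex.exp (Complex.I * n * θ)‖ ≤ 1 + 2*(M₁/ε) + 2*(M₂/ε) := by
      intro θ hθ
      have hθ2 : |θ| ≤ 2*ε := habs_θ θ hθ
      rw [norm_mul, hφ_abs, mul_one, hg2_def]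
      simp only []
      have t1 : ‖u2 θ * v θ‖ ≤ 1 := by
        rw [norm_mul, hu2_bd, one_mul]; exact hv_bd θ
      have t2 : ‖2*(u1 θ * v1 θ)‖ ≤ 2*(M₁/ε) := by
        rw [norm_mul, norm_mul, hu1_bd, one_mul, Complex.norm_two]
        exact mul_le_mul_of_nonneg_left (hv1_bd θ) (by norm_num)
      have t3 : ‖u θ * v2 θ‖ ≤ 2*(M₂/ε) := by
        rw [norm_mul]
        calc ‖u θ‖ * ‖v2 θ‖ ≤ (2*ε) * (M₂/ε^2) :=
              mul_le_mul ((hu_bd θ).trans hθ2) (hv2_bd θ) (norm_nonneg _)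
                (by positivity)
          _ = 2*(M₂/ε) := by field_simp
      calc ‖u2 θ * v θ + 2*(u1 θ * v1 θ) + u θ * v2 θ‖
          ≤ ‖u2 θ * v θ + 2*(u1 θ * v1 θ)‖ + ‖u θ * v2 θ‖ :=
            norm_add_le _ _
        _ ≤ (‖u2 θ * v θ‖ + ‖2*(u1 θ * v1 θ)‖)
            + ‖u θ * v2 θ‖ := by
            exact add_le_add_left (norm_add_le _ _) _
        _ ≤ 1 + 2*(M₁/ε) + 2*(M₂/ε) := by linarith
    have hI2 := intervalIntegral.norm_integral_le_of_norm_le_const hb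
    have h4 : |2*ε - (-(2*ε))| = 4*ε := by rw [abs_of_pos (by linarith)]; ring
    rw [h4] at hI2
    have hI2' : ‖∫ θ in (-(2*ε))..(2*ε), g2 θ * Complex.exp (Complex.I * n * θ)‖
        ≤ 2*Real.pi + 8*(M₁+M₂) := by
      calc ‖∫ θ in (-(2*ε))..(2*ε), g2 θ * Complex.exp (Complex.I * n * θ)‖
          ≤ (1 + 2*(M₁/ε) + 2*(M₂/ε)) * (4*ε) := hI2
        _ = 4*ε + 8*M₁ + 8*M₂ := by field_simp; ring
        _ ≤ 2*Real.pi + 8*(M₁+M₂) := by linarith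
    -- assemble
    have habsden : ‖(Complex.I*(n:ℂ)) * (Complex.I*(n:ℂ))‖ = (n:ℝ)^2 := by
      rw [norm_mul, norm_mul, Complex.norm_I, one_mul, Complex.norm_intCast, ← sq, sq_abs]
    have hn2 : (0:ℝ) < (n:ℝ)^2 := by positivity
    rw [hrep n, norm_mul, habs_coef, hIBP, norm_div, habsden,
      hsplit (fun θ => g2 θ * Complex.exp (Complex.I * n * θ)) (hcg2.mul (hcφ n)) hF0]
    calc (1/(2*Real.pi)) * (‖∫ θ in (-(2*ε))..(2*ε),
          g2 θ * Complex.exp (Complex.I * n * θ)‖ / (n:ℝ)^2)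
        ≤ (1/(2*Real.pi)) * ((2*Real.pi + 8*(M₁+M₂)) / (n:ℝ)^2) := by
          gcongr
      _ = ((2*Real.pi + 8*(M₁+M₂)) / (2*Real.pi)) / (n:ℝ)^2 := by ring
      _ ≤ C / (n:ℝ)^2 := by
          gcongr
          rw [div_le_iff₀ (by positivity), hCdef]
          nlinarith
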